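/- Let K_t, θ_t and the Kolmogorov density p(x;t,y) := (√3/(π t²))^d · exp( −(1/2)·|K_t^{-1/2}(y − θ_t(x))|² ) be as in the Kolmogorov example. Then there exists a constant C ≥ 1, depending only on d, such that for each i ∈ {1,2}, all t > 0 and all x, y ∈ ℝ^{2d}: | ∇_{x_i} p(x;t,y) | ≤ (C / t^{(2i−1)/2}) · (√3/(π t²))^d · exp( −C^{-1}·|𝕋_t^{-1}(y − θ_t(x))|² ). -/

import Mathlib

open MeasureTheory Real Matrix

noncomputable section

/-- Points of `ℝ^{2d}`, split into the two `ℝ^d`-components. -/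
abbrev Vec (d : ℕ) := EuclideanSpace ℝ (Fin d)

/-- Coordinates of a point of `ℝ^{2d} = ℝ^d × ℝ^d`. -/
def toCoord {d : ℕ} (v : Vec d × Vec d) : Fin d ⊕ Fin d → ℝ :=
  Sum.elim (fun i => v.1 i) (fun i => v.2 i)

/-- The Kolmogorov covariance matrix: block matrix with upper-left block `t·I`,
upper-right and lower-left blocks `(t²/2)·I`, lower-right block `(t³/3)·I`. -/
def kolK (d : ℕ) (t : ℝ) : Matrix (Fin d ⊕ Fin d) (Fin d ⊕ Fin d) ℝ :=
  Matrix.fromBlocks (t • 1) ((t ^ 2 / 2) • 1) ((t ^ 2 / 2) • 1) ((t ^ 3 / 3) • 1)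

/-- `θ_t(x) := (x₁, x₂ + t·x₁)`. -/
def kolTheta {d : ℕ} (t : ℝ) (x : Vec d × Vec d) : Vec d × Vec d :=
  (x.1, x.2 + t • x.1)

/-- The Kolmogorov density
`p(x;t,y) := (√3/(π t²))^d exp(-(1/2)|K_t^{-1/2}(y - θ_t(x))|²)`; here we use the exact
identity `|K_t^{-1/2} w|² = ⟨K_t⁻¹ w, w⟩` for the positive-definite square root. -/
def kolDensity (d : ℕ) (x : Vec d × Vec d) (t : ℝ) (y : Vec d × Vec d) : ℝ :=
  (Real.sqrt 3 / (Real.pi * t ^ 2)) ^ d *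
    Real.exp (-(1 / 2) *
      dotProduct ((kolK d t)⁻¹.mulVec (toCoord (y - kolTheta t x)))
        (toCoord (y - kolTheta t x)))

/-- `|𝕋_t⁻¹ v|²` for `v ∈ ℝ^{2d}`. -/
def TinvSq {d : ℕ} (t : ℝ) (v : Vec d × Vec d) : ℝ := ‖v.1‖ ^ 2 / t + ‖v.2‖ ^ 2 / t ^ 3

/-! ### Auxiliary lemmas -/

lemma kolKinv (d : ℕ) {t : ℝ} (ht : t ≠ 0) :
    (kolK d t)⁻¹ = Matrix.fromBlocks ((4/t) • 1) ((-6/t^2) • 1) ((-6/t^2) • 1) ((12/t^3) • 1) := by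
  apply Matrix.inv_eq_right_inv
  rw [kolK, Matrix.fromBlocks_multiply]
  ext i j
  rcases i with i | i <;> rcases j with j | j <;>
    simp [Matrix.one_apply, mul_ite, Matrix.fromBlocks] <;> split_ifs <;> field_simp <;> ring

lemma kol_quad (d : ℕ) {t : ℝ} (ht : t ≠ 0) (w : Vec d × Vec d) :
    dotProduct ((kolK d t)⁻¹.mulVec (toCoord w)) (toCoord w)
      = (4/t) * ‖w.1‖^2 - (12/t^2) * (inner ℝ w.1 w.2 : ℝ) + (12/t^3) * ‖w.2‖^2 := by
  rw [kolKinv d ht]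
  have hc : toCoord w = Sum.elim (fun i => w.1 i) (fun i => w.2 i) := rfl
  rw [hc, Matrix.fromBlocks_mulVec]
  simp only [Matrix.smul_mulVec, Matrix.one_mulVec]
  rw [← real_inner_self_eq_norm_sq, ← real_inner_self_eq_norm_sq]
  simp only [dotProduct, Fintype.sum_sum_type, Sum.elim_inl, Sum.elim_inr,
    Pi.add_apply, Pi.smul_apply, smul_eq_mul, PiLp.inner_apply, RCLike.inner_apply,
    conj_trivial, Finset.mul_sum, ← Finset.sum_add_distrib]
  simp only [Sum.elim_comp_inl, Sum.elim_comp_inr]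
  rw [← Finset.sum_sub_distrib, ← Finset.sum_add_distrib]
  exact Finset.sum_congr rfl fun i _ => by ring

lemma kolDensity_eq (d : ℕ) {t : ℝ} (ht : t ≠ 0) (x y : Vec d × Vec d) :
    kolDensity d x t y = (Real.sqrt 3 / (Real.pi * t ^ 2)) ^ d *
      Real.exp ((-(2/t)) * ‖y.1 - x.1‖^2
        + (6/t^2) * (inner ℝ (y.1 - x.1) (y.2 - (x.2 + t • x.1)) : ℝ)
        + (-(6/t^3)) * ‖y.2 - (x.2 + t • x.1)‖^2) := by
  rw [kolDensity, kol_quad d ht]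
  have h1 : (y - kolTheta t x).1 = y.1 - x.1 := rfl
  have h2 : (y - kolTheta t x).2 = y.2 - (x.2 + t • x.1) := rfl
  rw [h1, h2]
  congr 1
  ring

lemma hasFDerivAt_gauss {d : ℕ} (A α β γ s r : ℝ) (u v z₀ : Vec d) :
    HasFDerivAt (fun z : Vec d =>
        A * Real.exp (α * ‖u - s • z‖^2 + β * (inner ℝ (u - s • z) (v - r • z) : ℝ)
          + γ * ‖v - r • z‖^2))
      ((A * Real.exp (α * ‖u - s • z₀‖^2 + β * (inner ℝ (u - s • z₀) (v - r • z₀) : ℝ)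
          + γ * ‖v - r • z₀‖^2)) •
        (innerSL ℝ (-((2*α*s + β*r) • (u - s • z₀)) - ((β*s + 2*γ*r) • (v - r • z₀))))) z₀ := by
  have h1 : HasFDerivAt (fun z : Vec d => u - s • z)
      (-(s • ContinuousLinearMap.id ℝ (Vec d))) z₀ :=
    ((hasFDerivAt_id z₀).const_smul s).const_sub u
  have h2 : HasFDerivAt (fun z : Vec d => v - r • z)
      (-(r • ContinuousLinearMap.id ℝ (Vec d))) z₀ :=
    ((hasFDerivAt_id z₀).const_smul r).const_sub v
  have hg := (((h1.inner ℝ h1).const_mul α).add ((h1.inner ℝ h2).const_mul β)).add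
    ((h2.inner ℝ h2).const_mul γ)
  have hc := (hg.exp).const_mul A
  have hfun : (fun z : Vec d =>
      A * Real.exp (α * ‖u - s • z‖^2 + β * (inner ℝ (u - s • z) (v - r • z) : ℝ)
        + γ * ‖v - r • z‖^2)) = fun z : Vec d =>
      A * Real.exp (α * (inner ℝ (u - s • z) (u - s • z) : ℝ)
        + β * (inner ℝ (u - s • z) (v - r • z) : ℝ)
        + γ * (inner ℝ (v - r • z) (v - r • z) : ℝ)) := by
    funext z
    rw [real_inner_self_eq_norm_sq, real_inner_self_eq_norm_sq]
  rw [hfun, ← real_inner_self_eq_norm_sq, ← real_inner_self_eq_norm_sq]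
  refine hc.congr_fderiv ?_
  ext h
  simp only [ContinuousLinearMap.smul_apply, innerSL_apply_apply, ContinuousLinearMap.add_apply,
    ContinuousLinearMap.coe_comp', Function.comp_apply, ContinuousLinearMap.prod_apply,
    ContinuousLinearMap.neg_apply, ContinuousLinearMap.coe_smul', Pi.smul_apply, Pi.add_apply,
    ContinuousLinearMap.coe_id', id_eq, fderivInnerCLM_apply, inner_neg_left, inner_neg_right,
    real_inner_smul_left, real_inner_smul_right, inner_sub_left, inner_sub_right, smul_eq_mul]
  rw [real_inner_comm h u, real_inner_comm h v, real_inner_comm h z₀]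
  ring

lemma exp_poly_bound (k₁ k₂ p q : ℝ) (h₁ : k₁ ≤ 12) (h₂ : k₂ ≤ 12) (hp : 0 ≤ p) (hq : 0 ≤ q) :
    (k₁ * p + k₂ * q) * Real.exp (-(1/4) * (p^2 + q^2))
      ≤ 100 * Real.exp (-(100:ℝ)⁻¹ * (p^2 + q^2)) := by
  have hsplit : Real.exp (-(1/4) * (p^2+q^2))
      = Real.exp (-(6/25) * (p^2+q^2)) * Real.exp (-(100:ℝ)⁻¹ * (p^2+q^2)) := by
    rw [← Real.exp_add]; ring_nf
  rw [hsplit, ← mul_assoc]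
  have hE : (0:ℝ) < Real.exp (-(100:ℝ)⁻¹ * (p^2+q^2)) := Real.exp_pos _
  refine mul_le_mul_of_nonneg_right ?_ hE.le
  have hu : (6/25) * (p^2+q^2) + 1 ≤ Real.exp ((6/25) * (p^2+q^2)) := Real.add_one_le_exp _
  have hneg : Real.exp (-(6/25) * (p^2+q^2)) = (Real.exp ((6/25) * (p^2+q^2)))⁻¹ := by
    rw [← Real.exp_neg]; ring_nf
  rw [hneg, mul_inv_le_iff₀ (Real.exp_pos _)]
  have h12 : k₁ * p + k₂ * q ≤ 100 * ((6/25) * (p^2+q^2) + 1) := by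
    nlinarith [sq_nonneg (p - 1/4), sq_nonneg (q - 1/4), mul_le_mul_of_nonneg_right h₁ hp,
      mul_le_mul_of_nonneg_right h₂ hq]
  nlinarith [h12, hu]

lemma core_bound (t a b I : ℝ) (ht : 0 < t) (ha : 0 ≤ a) (hb : 0 ≤ b) (hI : I ≤ a * b)
    (k₁ k₂ : ℝ) (hk₁ : 0 ≤ k₁) (hk₂ : 0 ≤ k₂) (h₁ : k₁ ≤ 12) (h₂ : k₂ ≤ 12) :
    Real.exp (-(2/t) * a^2 + (6/t^2) * I + (-(6/t^3)) * b^2)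
        * (k₁ * (a / Real.sqrt t) + k₂ * (b / Real.sqrt t ^ 3))
      ≤ 100 * Real.exp (-(100:ℝ)⁻¹ * (a^2/t + b^2/t^3)) := by
  set s := Real.sqrt t with hs_def
  have hs : 0 < s := Real.sqrt_pos.mpr ht
  have hs2 : s^2 = t := Real.sq_sqrt ht.le
  set p := a / s with hp_def
  set q := b / s^3 with hq_def
  have hp : 0 ≤ p := by positivity
  have hq : 0 ≤ q := by positivity
  have hp2 : p^2 = a^2 / t := by rw [hp_def, div_pow, hs2]
  have hq2 : q^2 = b^2 / t^3 := by
    rw [hq_def, div_pow, ← hs2]; ring_nf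
  have hg : -(2/t) * a^2 + (6/t^2) * I + (-(6/t^3)) * b^2 ≤ -(1/4) * (p^2 + q^2) := by
    rw [hp2, hq2]
    have hI' : (6/t^2) * I ≤ (6/t^2) * (a*b) :=
      mul_le_mul_of_nonneg_left hI (by positivity)
    have hkey : -(2/t) * a^2 + (6/t^2) * (a*b) + (-(6/t^3)) * b^2
        ≤ -(1/4) * (a^2/t + b^2/t^3) := by
      have heq : -(1/4) * (a^2/t + b^2/t^3) - (-(2/t) * a^2 + (6/t^2) * (a*b) + (-(6/t^3)) * b^2)
          = (7*(a*t)^2 - 24*(a*t)*b + 23*b^2) / (4*t^3) := by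
        field_simp
        ring
      have hN : 0 ≤ 7*(a*t)^2 - 24*(a*t)*b + 23*b^2 := by
        nlinarith [sq_nonneg (7*(a*t) - 12*b), sq_nonneg b]
      have := div_nonneg hN (by positivity : (0:ℝ) ≤ 4*t^3)
      linarith
    linarith
  have step1 : Real.exp (-(2/t) * a^2 + (6/t^2) * I + (-(6/t^3)) * b^2)
      ≤ Real.exp (-(1/4) * (p^2 + q^2)) := Real.exp_le_exp.mpr hg
  calc Real.exp (-(2/t) * a^2 + (6/t^2) * I + (-(6/t^3)) * b^2) * (k₁ * p + k₂ * q)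
      ≤ Real.exp (-(1/4) * (p^2+q^2)) * (k₁ * p + k₂ * q) := by
        exact mul_le_mul_of_nonneg_right step1
          (add_nonneg (mul_nonneg hk₁ hp) (mul_nonneg hk₂ hq))
    _ = (k₁ * p + k₂ * q) * Real.exp (-(1/4) * (p^2+q^2)) := by ring
    _ ≤ 100 * Real.exp (-(100:ℝ)⁻¹ * (p^2+q^2)) := exp_poly_bound k₁ k₂ p q h₁ h₂ hp hq
    _ = 100 * Real.exp (-(100:ℝ)⁻¹ * (a^2/t + b^2/t^3)) := by rw [hp2, hq2]

/-- **Gradient bounds for the Kolmogorov density.** -/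
theorem kolmogorov_density_gradient_bounds (d : ℕ) :
    ∃ C : ℝ, 1 ≤ C ∧
      ∀ (t : ℝ) (x y : Vec d × Vec d), 0 < t →
        ‖fderiv ℝ (fun z : Vec d => kolDensity d (z, x.2) t y) x.1‖
            ≤ C / t ^ ((1 : ℝ) / 2) * (Real.sqrt 3 / (Real.pi * t ^ 2)) ^ d *
              Real.exp (-C⁻¹ * TinvSq t (y - kolTheta t x)) ∧
        ‖fderiv ℝ (fun z : Vec d => kolDensity d (x.1, z) t y) x.2‖
            ≤ C / t ^ ((3 : ℝ) / 2) * (Real.sqrt 3 / (Real.pi * t ^ 2)) ^ d *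
              Real.exp (-C⁻¹ * TinvSq t (y - kolTheta t x)) := by
  refine ⟨100, by norm_num, fun t x y ht => ?_⟩
  have ht' : t ≠ 0 := ne_of_gt ht
  have hA : 0 < (Real.sqrt 3 / (Real.pi * t ^ 2)) ^ d :=
    pow_pos (div_pos (Real.sqrt_pos.mpr (by norm_num)) (mul_pos Real.pi_pos (pow_pos ht 2))) d
  set A := (Real.sqrt 3 / (Real.pi * t ^ 2)) ^ d with hA_def
  set s := Real.sqrt t with hs_def
  have hs : 0 < s := Real.sqrt_pos.mpr ht
  have hs2 : s ^ 2 = t := Real.sq_sqrt ht.le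
  set a := ‖y.1 - x.1‖ with ha_def
  set b := ‖y.2 - (x.2 + t • x.1)‖ with hb_def
  have hT : TinvSq t (y - kolTheta t x) = a ^ 2 / t + b ^ 2 / t ^ 3 := rfl
  have hI : (inner ℝ (y.1 - x.1) (y.2 - (x.2 + t • x.1)) : ℝ) ≤ a * b := real_inner_le_norm _ _
  have h12r : t ^ ((1:ℝ)/2) = s := (Real.sqrt_eq_rpow t).symm
  have h32r : t ^ ((3:ℝ)/2) = s ^ 3 := by
    rw [show ((3:ℝ)/2) = ((1:ℝ)/2) * ((3:ℕ):ℝ) by norm_num, Real.rpow_mul ht.le,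
      ← Real.sqrt_eq_rpow, Real.rpow_natCast]
  constructor
  · -- derivative in the first variable
    have key := hasFDerivAt_gauss A (-(2/t)) (6/t^2) (-(6/t^3)) 1 t y.1 (y.2 - x.2) x.1
    have hfe : (fun z : Vec d => kolDensity d (z, x.2) t y)
        = fun z : Vec d => A * Real.exp ((-(2/t)) * ‖y.1 - (1:ℝ) • z‖^2
            + (6/t^2) * (inner ℝ (y.1 - (1:ℝ) • z) (y.2 - x.2 - t • z) : ℝ)
            + (-(6/t^3)) * ‖y.2 - x.2 - t • z‖^2) := by
      funext z
      rw [kolDensity_eq d ht' (z, x.2) y]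
      dsimp only
      simp only [one_smul, sub_add_eq_sub_sub]
      rfl
    rw [hfe, key.fderiv, norm_smul, innerSL_apply_norm, Real.norm_eq_abs,
      abs_of_pos (mul_pos hA (Real.exp_pos _))]
    simp only [one_smul]
    have hv : y.2 - x.2 - t • x.1 = y.2 - (x.2 + t • x.1) := (sub_add_eq_sub_sub _ _ _).symm
    rw [hv]
    have hVle : ‖-((2*(-(2/t))*1 + 6/t^2*t) • (y.1 - x.1))
        - ((6/t^2*1 + 2*(-(6/t^3))*t) • (y.2 - (x.2 + t • x.1)))‖ ≤ 2/t * a + 6/t^2 * b := by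
      refine (norm_sub_le _ _).trans ?_
      rw [norm_neg, norm_smul, norm_smul, Real.norm_eq_abs, Real.norm_eq_abs]
      have e1 : |2*(-(2/t))*1 + 6/t^2*t| = 2/t := by
        rw [show 2*(-(2/t))*1 + 6/t^2*t = 2/t by field_simp; ring]
        exact abs_of_pos (by positivity)
      have e2 : |6/t^2*1 + 2*(-(6/t^3))*t| = 6/t^2 := by
        rw [show 6/t^2*1 + 2*(-(6/t^3))*t = -(6/t^2) by field_simp; ring, abs_neg]
        exact abs_of_pos (by positivity)
      rw [e1, e2]
    have hid : 2/t * a + 6/t^2 * b = (2*(a/s) + 6*(b/s^3))/s := by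
      rw [← hs2]; field_simp [ne_of_gt hs]
    calc A * Real.exp ((-(2/t)) * a^2
            + (6/t^2) * (inner ℝ (y.1 - x.1) (y.2 - (x.2 + t • x.1)) : ℝ) + (-(6/t^3)) * b^2)
          * ‖-((2*(-(2/t))*1 + 6/t^2*t) • (y.1 - x.1))
            - ((6/t^2*1 + 2*(-(6/t^3))*t) • (y.2 - (x.2 + t • x.1)))‖
        ≤ A * Real.exp ((-(2/t)) * a^2
            + (6/t^2) * (inner ℝ (y.1 - x.1) (y.2 - (x.2 + t • x.1)) : ℝ) + (-(6/t^3)) * b^2)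
          * (2/t * a + 6/t^2 * b) :=
          mul_le_mul_of_nonneg_left hVle (by positivity)
      _ = A * ((Real.exp ((-(2/t)) * a^2
            + (6/t^2) * (inner ℝ (y.1 - x.1) (y.2 - (x.2 + t • x.1)) : ℝ) + (-(6/t^3)) * b^2)
            * (2*(a/s) + 6*(b/s^3))) / s) := by rw [hid]; ring
      _ ≤ A * ((100 * Real.exp (-(100:ℝ)⁻¹ * (a^2/t + b^2/t^3))) / s) := by
          gcongr A * (?_ / s)
          exact core_bound t a b _ ht (norm_nonneg _) (norm_nonneg _) hI 2 6
            (by norm_num) (by norm_num) (by norm_num) (by norm_num)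
      _ = 100 / t ^ ((1:ℝ)/2) * A * Real.exp (-(100:ℝ)⁻¹ * TinvSq t (y - kolTheta t x)) := by
          rw [hT, h12r]; ring
  · -- derivative in the second variable
    have key := hasFDerivAt_gauss A (-(2/t)) (6/t^2) (-(6/t^3)) 0 1
      (y.1 - x.1) (y.2 - t • x.1) x.2
    have hfe : (fun z : Vec d => kolDensity d (x.1, z) t y)
        = fun z : Vec d => A * Real.exp ((-(2/t)) * ‖y.1 - x.1 - (0:ℝ) • z‖^2
            + (6/t^2) * (inner ℝ (y.1 - x.1 - (0:ℝ) • z) (y.2 - t • x.1 - (1:ℝ) • z) : ℝ)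
            + (-(6/t^3)) * ‖y.2 - t • x.1 - (1:ℝ) • z‖^2) := by
      funext z
      rw [kolDensity_eq d ht' (x.1, z) y]
      dsimp only
      simp only [one_smul, zero_smul, sub_zero]
      rw [show y.2 - (z + t • x.1) = y.2 - t • x.1 - z by abel]
    rw [hfe, key.fderiv, norm_smul, innerSL_apply_norm, Real.norm_eq_abs,
      abs_of_pos (mul_pos hA (Real.exp_pos _))]
    simp only [one_smul, zero_smul, sub_zero]
    have hv : y.2 - t • x.1 - x.2 = y.2 - (x.2 + t • x.1) := by abel
    rw [hv]
    have hVle : ‖-((2*(-(2/t))*0 + 6/t^2*1) • (y.1 - x.1))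
        - ((6/t^2*0 + 2*(-(6/t^3))*1) • (y.2 - (x.2 + t • x.1)))‖ ≤ 6/t^2 * a + 12/t^3 * b := by
      refine (norm_sub_le _ _).trans ?_
      rw [norm_neg, norm_smul, norm_smul, Real.norm_eq_abs, Real.norm_eq_abs]
      have e1 : |2*(-(2/t))*0 + 6/t^2*1| = 6/t^2 := by
        rw [show 2*(-(2/t))*0 + 6/t^2*1 = 6/t^2 by ring]
        exact abs_of_pos (by positivity)
      have e2 : |6/t^2*0 + 2*(-(6/t^3))*1| = 12/t^3 := by
        rw [show 6/t^2*0 + 2*(-(6/t^3))*1 = -(12/t^3) by ring, abs_neg]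
        exact abs_of_pos (by positivity)
      rw [e1, e2]
    have hid : 6/t^2 * a + 12/t^3 * b = (6*(a/s) + 12*(b/s^3))/s^3 := by
      rw [← hs2]; field_simp [ne_of_gt hs]
    calc A * Real.exp ((-(2/t)) * a^2
            + (6/t^2) * (inner ℝ (y.1 - x.1) (y.2 - (x.2 + t • x.1)) : ℝ) + (-(6/t^3)) * b^2)
          * ‖-((2*(-(2/t))*0 + 6/t^2*1) • (y.1 - x.1))
            - ((6/t^2*0 + 2*(-(6/t^3))*1) • (y.2 - (x.2 + t • x.1)))‖
        ≤ A * Real.exp ((-(2/t)) * a^2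
            + (6/t^2) * (inner ℝ (y.1 - x.1) (y.2 - (x.2 + t • x.1)) : ℝ) + (-(6/t^3)) * b^2)
          * (6/t^2 * a + 12/t^3 * b) :=
          mul_le_mul_of_nonneg_left hVle (by positivity)
      _ = A * ((Real.exp ((-(2/t)) * a^2
            + (6/t^2) * (inner ℝ (y.1 - x.1) (y.2 - (x.2 + t • x.1)) : ℝ) + (-(6/t^3)) * b^2)
            * (6*(a/s) + 12*(b/s^3))) / s^3) := by rw [hid]; ring
      _ ≤ A * ((100 * Real.exp (-(100:ℝ)⁻¹ * (a^2/t + b^2/t^3))) / s^3) := by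
          gcongr A * (?_ / s^3)
          exact core_bound t a b _ ht (norm_nonneg _) (norm_nonneg _) hI 6 12
            (by norm_num) (by norm_num) (by norm_num) (by norm_num)
      _ = 100 / t ^ ((3:ℝ)/2) * A * Real.exp (-(100:ℝ)⁻¹ * TinvSq t (y - kolTheta t x)) := by
          rw [hT, h32r]; ring

end
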